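/- arXiv:2605.06751 — 3 statements merged into one kernel-verified Lean document; each statement's English description precedes it below -/
import Mathlib

section
/- (Mutual-information security implies distinguishing security.) (Adv^{DS})² ≤ 2·Adv^{MIS}. In particular, for any u₀, u₁ ∈ 𝒰 and V ∈ 𝒱, if U is uniformly distributed on {u₀,u₁} then I(U;Z_V) ≥ (1/2)·SD(P_{V,u₀}, P_{V,u₁})². -/
open scoped BigOperators Classical

noncomputable section

/-- A probability distribution on a finite type. -/
def IsProbDist {α : Type} [Fintype α] (p : α → ℝ) : Prop :=
  (∀ a, 0 ≤ p a) ∧ (∑ a, p a) = 1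

/-- Total variation distance between two distributions on a finite set. -/
def SD {Z : Type} [Fintype Z] (p q : Z → ℝ) : ℝ := (1/2) * ∑ z, |p z - q z|

/-- Distinguishing advantage: the maximum over message pairs `(u₀,u₁)` and channels `V` of
the total variation distance between the output distributions `P_{V,u₀}` and `P_{V,u₁}`. -/
def AdvDSfam {U Z V : Type} [Fintype U] [Fintype Z] (P : V → U → Z → ℝ) : ℝ :=
  sSup {r : ℝ | ∃ (u₀ u₁ : U) (v : V), r = SD (P v u₀) (P v u₁)}

/-- Semantic advantage: the supremum over message distributions `pU`, finite types `T`,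
functions `f : U → T`, channels `V` and adversaries `𝒜 : Z → T` of
`Pr{𝒜(Z_V) = f(U)} − max_t Pr{f(U) = t}`. -/
def AdvSSfam {U Z V : Type} [Fintype U] [Fintype Z] (P : V → U → Z → ℝ) : ℝ :=
  sSup {r : ℝ | ∃ (pU : U → ℝ), IsProbDist pU ∧
    ∃ (T : Type) (_ : Fintype T) (f : U → T) (v : V) (A : Z → T),
      r = (∑ u, ∑ z, pU u * P v u z * (if A z = f u then 1 else 0))
          - sSup {q : ℝ | ∃ t : T, q = ∑ u, (if f u = t then pU u else 0)}}

/-- Shannon mutual information (natural logarithm) of the joint law `p u * q u z`. -/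
def mutualInfo {U Z : Type} [Fintype U] [Fintype Z] (p : U → ℝ) (q : U → Z → ℝ) : ℝ :=
  ∑ u, ∑ z, p u * q u z * Real.log (q u z / (∑ v, p v * q v z))

/-- Mutual-information advantage: the supremum over message distributions `pU` and
channels `V` of the mutual information `I(U;Z_V)`. -/
def AdvMISfam {U Z V : Type} [Fintype U] [Fintype Z] (P : V → U → Z → ℝ) : ℝ :=
  sSup {r : ℝ | ∃ (pU : U → ℝ), IsProbDist pU ∧ ∃ v : V, r = mutualInfo pU (fun u => P v u)}

lemma myLogBound {s : ℝ} (h0 : 0 ≤ s) (h1 : s < 1) :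
    2*s ≤ Real.log (1+s) - Real.log (1-s) := by
  set φ : ℝ → ℝ := fun x => Real.log (1+x) - Real.log (1-x) - 2*x with hφ
  have key : MonotoneOn φ (Set.Ico (0:ℝ) 1) := by
    apply monotoneOn_of_deriv_nonneg (convex_Ico 0 1)
    · apply ContinuousOn.sub (ContinuousOn.sub ?_ ?_) (by fun_prop)
      · apply ContinuousOn.log (by fun_prop)
        intro x hx; simp only [Set.mem_Ico] at hx; nlinarith [hx.1]
      · apply ContinuousOn.log (by fun_prop)
        intro x hx; simp only [Set.mem_Ico] at hx; nlinarith [hx.2]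
    · rw [interior_Ico]
      intro x hx
      simp only [Set.mem_Ioo] at hx
      have h1x : (0:ℝ) < 1 + x := by linarith
      have h2x : (0:ℝ) < 1 - x := by linarith
      exact (((((Real.differentiableAt_log h1x.ne').comp x (by fun_prop)).sub
        ((Real.differentiableAt_log h2x.ne').comp x (by fun_prop))).sub (by fun_prop)) : DifferentiableAt ℝ φ x).differentiableWithinAt
    · rw [interior_Ico]
      intro x hx
      simp only [Set.mem_Ioo] at hx
      have h1x : (0:ℝ) < 1 + x := by linarith
      have h2x : (0:ℝ) < 1 - x := by linarith
      have d1 : HasDerivAt (fun y : ℝ => Real.log (1+y)) (1/(1+x)) x := by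
        have := (Real.hasDerivAt_log h1x.ne').comp x ((hasDerivAt_id x).const_add 1)
        simpa [Function.comp_def] using this
      have d2 : HasDerivAt (fun y : ℝ => Real.log (1-y)) (-(1/(1-x))) x := by
        have h : HasDerivAt (fun y : ℝ => 1 - y) (-1) x := by
          simpa using (hasDerivAt_id x).const_sub 1
        have := (Real.hasDerivAt_log h2x.ne').comp x h
        simpa [Function.comp_def] using this
      have d : HasDerivAt φ (1/(1+x) - (-(1/(1-x))) - 2) x := by
        exact ((d1.sub d2).sub (by simpa using (hasDerivAt_id x).const_mul 2))
      rw [d.deriv]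
      have h2 : (2:ℝ) ≤ 1/(1+x) + 1/(1-x) := by
        rw [div_add_div _ _ h1x.ne' h2x.ne', le_div_iff₀ (by positivity)]
        nlinarith
      linarith
  have := key (Set.mem_Ico.2 ⟨le_refl 0, by norm_num⟩) (Set.mem_Ico.2 ⟨h0, h1⟩) h0
  simp only [hφ] at this
  norm_num at this
  linarith

lemma myFNonneg {s : ℝ} (h0 : 0 ≤ s) (h1 : s ≤ 1) :
    s^2 ≤ (1+s)*Real.log (1+s) + (1-s)*Real.log (1-s) := by
  rcases eq_or_lt_of_le h1 with rfl | h1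
  · norm_num
    nlinarith [Real.log_two_gt_d9]
  set ψ : ℝ → ℝ := fun x => (1+x)*Real.log (1+x) + (1-x)*Real.log (1-x) - x^2 with hψ
  have key : MonotoneOn ψ (Set.Ico (0:ℝ) 1) := by
    apply monotoneOn_of_deriv_nonneg (convex_Ico 0 1)
    · apply ContinuousOn.sub (ContinuousOn.add ?_ ?_) (by fun_prop)
      · apply ContinuousOn.mul (by fun_prop)
        apply ContinuousOn.log (by fun_prop)
        intro x hx; simp only [Set.mem_Ico] at hx; nlinarith [hx.1]
      · apply ContinuousOn.mul (by fun_prop)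
        apply ContinuousOn.log (by fun_prop)
        intro x hx; simp only [Set.mem_Ico] at hx; nlinarith [hx.2]
    · rw [interior_Ico]
      intro x hx
      simp only [Set.mem_Ioo] at hx
      have h1x : (0:ℝ) < 1 + x := by linarith
      have h2x : (0:ℝ) < 1 - x := by linarith
      have : DifferentiableAt ℝ ψ x := by
        apply DifferentiableAt.sub _ (by fun_prop)
        apply DifferentiableAt.add
        · exact (differentiableAt_id.const_add 1).mul
            ((Real.differentiableAt_log h1x.ne').comp x (by fun_prop))
        · exact ((differentiableAt_id.const_sub 1) : DifferentiableAt ℝ (fun y:ℝ => 1 - y) x).mul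
            ((Real.differentiableAt_log h2x.ne').comp x
              ((differentiableAt_id.const_sub 1) : DifferentiableAt ℝ (fun y:ℝ => 1 - y) x))
      exact this.differentiableWithinAt
    · rw [interior_Ico]
      intro x hx
      simp only [Set.mem_Ioo] at hx
      have h1x : (0:ℝ) < 1 + x := by linarith
      have h2x : (0:ℝ) < 1 - x := by linarith
      have dl1 : HasDerivAt (fun y : ℝ => Real.log (1+y)) (1/(1+x)) x := by
        simpa [Function.comp_def] using (Real.hasDerivAt_log h1x.ne').comp x ((hasDerivAt_id x).const_add 1)
      have dl2 : HasDerivAt (fun y : ℝ => Real.log (1-y)) (-(1/(1-x))) x := by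
        have h : HasDerivAt (fun y : ℝ => 1 - y) (-1) x := by
          simpa using (hasDerivAt_id x).const_sub 1
        simpa [Function.comp_def] using (Real.hasDerivAt_log h2x.ne').comp x h
      have d1 : HasDerivAt (fun y : ℝ => (1+y)*Real.log (1+y))
          (1 * Real.log (1+x) + (1+x) * (1/(1+x))) x :=
        HasDerivAt.mul (by simpa using (hasDerivAt_id x).const_add 1) dl1
      have d2 : HasDerivAt (fun y : ℝ => (1-y)*Real.log (1-y))
          ((-1) * Real.log (1-x) + (1-x) * (-(1/(1-x)))) x :=
        HasDerivAt.mul (by simpa using (hasDerivAt_id x).const_sub 1) dl2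
      have dsq : HasDerivAt (fun y : ℝ => y^2) (2*x) x := by
        simpa using hasDerivAt_pow 2 x
      have d : HasDerivAt ψ
          ((1 * Real.log (1+x) + (1+x) * (1/(1+x))) +
           ((-1) * Real.log (1-x) + (1-x) * (-(1/(1-x)))) - 2*x) x := (d1.add d2).sub dsq
      rw [d.deriv]
      have e1 : (1+x) * (1/(1+x)) = 1 := by field_simp
      have e2 : (1-x) * (-(1/(1-x))) = -1 := by field_simp
      rw [e1, e2]
      have := myLogBound hx.1.le hx.2
      linarith
  have := key (Set.mem_Ico.2 ⟨le_refl 0, by norm_num⟩) (Set.mem_Ico.2 ⟨h0, h1⟩) h0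
  simp only [hψ] at this
  norm_num at this
  linarith

lemma myFNonneg' {s : ℝ} (h : |s| ≤ 1) :
    s^2 ≤ (1+s)*Real.log (1+s) + (1-s)*Real.log (1-s) := by
  rcases le_total 0 s with hs | hs
  · exact myFNonneg hs (by rwa [abs_of_nonneg hs] at h)
  · have := myFNonneg (neg_nonneg.2 hs) (by rwa [abs_of_nonpos hs] at h)
    have e1 : 1 + -s = 1 - s := by ring
    have e2 : 1 - -s = 1 + s := by ring
    rw [e1, e2] at this
    nlinarith [this]

lemma myPointwise {a b : ℝ} (ha : 0 ≤ a) (hb : 0 ≤ b) (hm : 0 < (a+b)/2) :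
    (a-b)^2/(4*((a+b)/2)) ≤ a*Real.log (a/((a+b)/2)) + b*Real.log (b/((a+b)/2)) := by
  set m := (a+b)/2 with hmdef
  set s := (a-b)/(2*m) with hs
  have habs : |s| ≤ 1 := by
    rw [abs_div, abs_of_pos (by linarith : (0:ℝ) < 2*m), div_le_one (by linarith)]
    rw [abs_le]; constructor <;> nlinarith
  have e1 : 1 + s = a/m := by rw [hs]; field_simp; linarith [hmdef]
  have e2 : 1 - s = b/m := by rw [hs]; field_simp; linarith [hmdef]
  have key := myFNonneg' habs
  rw [e1, e2] at key
  have hkey : m * s^2 ≤ m * ((a/m)*Real.log (a/m) + (b/m)*Real.log (b/m)) :=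
    mul_le_mul_of_nonneg_left key hm.le
  have e3 : m * ((a/m)*Real.log (a/m) + (b/m)*Real.log (b/m))
      = a*Real.log (a/m) + b*Real.log (b/m) := by field_simp
  have e4 : m * s^2 = (a-b)^2/(4*m) := by
    rw [hs]; field_simp; ring
  rw [e3, e4] at hkey
  exact hkey

lemma myCore {Z : Type} [Fintype Z] (p0 p1 : Z → ℝ)
    (h0 : IsProbDist p0) (h1 : IsProbDist p1) :
    (SD p0 p1)^2 ≤ ∑ z, (p0 z * Real.log (p0 z / ((p0 z + p1 z)/2))
      + p1 z * Real.log (p1 z / ((p0 z + p1 z)/2))) := by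
  classical
  set m : Z → ℝ := fun z => (p0 z + p1 z)/2 with hm
  set d : Z → ℝ := fun z => p0 z - p1 z with hd
  have hmnn : ∀ z, 0 ≤ m z := fun z => by
    have := h0.1 z; have := h1.1 z; simp only [hm]; linarith
  have hzero : ∀ z, m z = 0 → p0 z = 0 ∧ p1 z = 0 := by
    intro z hz
    have := h0.1 z; have := h1.1 z
    constructor <;> [skip; skip] <;> · simp only [hm] at hz; linarith
  -- step 1 : sum ≥ ∑ h
  have step1 : ∑ z, (if m z = 0 then (0:ℝ) else d z^2/(4*m z))
      ≤ ∑ z, (p0 z * Real.log (p0 z / m z) + p1 z * Real.log (p1 z / m z)) := by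
    apply Finset.sum_le_sum
    intro z _
    by_cases hz : m z = 0
    · rcases hzero z hz with ⟨e0, e1⟩
      simp [hz, e0, e1]
    · simp only [hz, if_false]
      exact myPointwise (h0.1 z) (h1.1 z) (lt_of_le_of_ne (hmnn z) (Ne.symm hz))
  -- step 2 : Cauchy-Schwarz
  have hsm : ∑ z, m z = 1 := by
    simp only [hm]
    rw [← Finset.sum_div, Finset.sum_add_distrib, h0.2, h1.2]
    norm_num
  have step2 : (∑ z, |d z|)^2 ≤ ∑ z, (if m z = 0 then (0:ℝ) else d z^2/(4*m z)) * 4 := by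
    have cs := Finset.sum_mul_sq_le_sq_mul_sq Finset.univ
      (fun z => if m z = 0 then (0:ℝ) else |d z| / Real.sqrt (m z))
      (fun z => Real.sqrt (m z))
    have e1 : ∀ z, (if m z = 0 then (0:ℝ) else |d z| / Real.sqrt (m z)) * Real.sqrt (m z)
        = |d z| := by
      intro z
      by_cases hz : m z = 0
      · rcases hzero z hz with ⟨e0, e1⟩
        simp [hz, hd, e0, e1]
      · have hpos : 0 < m z := lt_of_le_of_ne (hmnn z) (Ne.symm hz)
        have : Real.sqrt (m z) ≠ 0 := by positivity
        rw [if_neg hz]; exact div_mul_cancel₀ _ this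
    have e2 : ∀ z, (Real.sqrt (m z))^2 = m z := fun z => Real.sq_sqrt (hmnn z)
    have e3 : ∀ z, (if m z = 0 then (0:ℝ) else |d z| / Real.sqrt (m z))^2
        = (if m z = 0 then (0:ℝ) else d z^2/(4*m z)) * 4 := by
      intro z
      by_cases hz : m z = 0
      · simp [hz]
      · have hpos : 0 < m z := lt_of_le_of_ne (hmnn z) (Ne.symm hz)
        simp only [hz, if_false]
        rw [div_pow, Real.sq_sqrt (hmnn z), sq_abs]
        field_simp
    simp only [e1, e2, e3] at cs
    calc (∑ z, |d z|)^2 ≤ (∑ z, (if m z = 0 then (0:ℝ) else d z^2/(4*m z)) * 4) * ∑ z, m z := cs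
      _ = _ := by rw [hsm, mul_one]
  -- combine
  have hSD : SD p0 p1 = (1/2) * ∑ z, |d z| := rfl
  rw [hSD]
  have e : ∑ z, (p0 z * Real.log (p0 z / ((p0 z + p1 z)/2))
      + p1 z * Real.log (p1 z / ((p0 z + p1 z)/2)))
      = ∑ z, (p0 z * Real.log (p0 z / m z) + p1 z * Real.log (p1 z / m z)) := rfl
  rw [e, ← Finset.sum_mul] at *
  nlinarith [step1, step2]

lemma myHalf {Z : Type} [Fintype Z] (p0 p1 : Z → ℝ)
    (h0 : IsProbDist p0) (h1 : IsProbDist p1) :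
    (1/2)*(SD p0 p1)^2 ≤
      (2:ℝ)⁻¹ * (∑ z, p0 z * Real.log (p0 z / ((2:ℝ)⁻¹ * p0 z + (2:ℝ)⁻¹ * p1 z)))
      + (2:ℝ)⁻¹ * (∑ z, p1 z * Real.log (p1 z / ((2:ℝ)⁻¹ * p0 z + (2:ℝ)⁻¹ * p1 z))) := by
  have e : ∀ z, (2:ℝ)⁻¹ * p0 z + (2:ℝ)⁻¹ * p1 z = (p0 z + p1 z)/2 := fun z => by ring
  simp only [e]
  have key := myCore p0 p1 h0 h1
  rw [Finset.sum_add_distrib] at key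
  linarith

lemma myBool {Z : Type} [Fintype Z] (q : Bool → Z → ℝ)
    (h0 : IsProbDist (q false)) (h1 : IsProbDist (q true)) :
    (1/2) * (SD (q false) (q true))^2 ≤ mutualInfo (fun _ : Bool => (1:ℝ)/2) q := by
  unfold mutualInfo
  rw [Fintype.sum_bool]
  have hden : ∀ z, (∑ b, (1/2:ℝ) * q b z) = (2:ℝ)⁻¹ * q false z + (2:ℝ)⁻¹ * q true z :=
    fun z => by rw [Fintype.sum_bool]; ring
  simp only [hden]
  have h := myHalf (q false) (q true) h0 h1
  rw [Finset.mul_sum, Finset.mul_sum] at h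
  have e : ∀ (x l : ℝ), (2:ℝ)⁻¹ * (x * l) = 1/2 * x * l := fun x l => by ring
  simp only [e] at h
  linarith

lemma myPUprob {U : Type} [Fintype U] (u₀ u₁ : U) :
    IsProbDist (fun u => (if u = u₀ then (2:ℝ)⁻¹ else 0) + (if u = u₁ then (2:ℝ)⁻¹ else 0)) := by
  constructor
  · intro u; simp only; split_ifs <;> norm_num
  · rw [Finset.sum_add_distrib]
    rw [Finset.sum_ite_eq' Finset.univ u₀ (fun _ => (2:ℝ)⁻¹)]
    rw [Finset.sum_ite_eq' Finset.univ u₁ (fun _ => (2:ℝ)⁻¹)]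
    simp; norm_num

lemma myTwoPoint {U Z : Type} [Fintype U] [Fintype Z] (q : U → Z → ℝ)
    (hq : ∀ u, IsProbDist (q u)) (u₀ u₁ : U) :
    (1/2) * (SD (q u₀) (q u₁))^2 ≤
      mutualInfo (fun u => (if u = u₀ then (2:ℝ)⁻¹ else 0) + (if u = u₁ then (2:ℝ)⁻¹ else 0)) q := by
  unfold mutualInfo
  have hden : ∀ z, (∑ v, ((if v = u₀ then (2:ℝ)⁻¹ else 0) + (if v = u₁ then (2:ℝ)⁻¹ else 0)) * q v z)
      = (2:ℝ)⁻¹ * q u₀ z + (2:ℝ)⁻¹ * q u₁ z := by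
    intro z
    simp only [add_mul, ite_mul, zero_mul, Finset.sum_add_distrib,
      Finset.sum_ite_eq', Finset.mem_univ, if_true]
  simp only [hden]
  have houter : (∑ u, ∑ z, ((if u = u₀ then (2:ℝ)⁻¹ else 0) + (if u = u₁ then (2:ℝ)⁻¹ else 0))
        * q u z * Real.log (q u z / ((2:ℝ)⁻¹ * q u₀ z + (2:ℝ)⁻¹ * q u₁ z)))
      = (2:ℝ)⁻¹ * (∑ z, q u₀ z * Real.log (q u₀ z / ((2:ℝ)⁻¹ * q u₀ z + (2:ℝ)⁻¹ * q u₁ z)))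
        + (2:ℝ)⁻¹ * (∑ z, q u₁ z * Real.log (q u₁ z / ((2:ℝ)⁻¹ * q u₀ z + (2:ℝ)⁻¹ * q u₁ z))) := by
    simp only [mul_assoc, ← Finset.mul_sum]
    simp only [add_mul, ite_mul, zero_mul, Finset.sum_add_distrib,
      Finset.sum_ite_eq', Finset.mem_univ, if_true]
  rw [houter]
  exact myHalf (q u₀) (q u₁) (hq u₀) (hq u₁)

lemma myMIBound {U Z : Type} [Fintype U] [Fintype Z] (p : U → ℝ) (q : U → Z → ℝ)
    (hp : IsProbDist p) (hq : ∀ u, IsProbDist (q u)) :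
    mutualInfo p q ≤ (Fintype.card U : ℝ) := by
  unfold mutualInfo
  calc ∑ u, ∑ z, p u * q u z * Real.log (q u z / (∑ v, p v * q v z))
      ≤ ∑ u, ∑ z, p u * q u z * (-Real.log (p u)) := by
        apply Finset.sum_le_sum; intro u _
        apply Finset.sum_le_sum; intro z _
        by_cases hpu : p u = 0
        · simp [hpu]
        by_cases hquz : q u z = 0
        · simp [hquz]
        have hpu' : 0 < p u := lt_of_le_of_ne (hp.1 u) (Ne.symm hpu)
        have hquz' : 0 < q u z := lt_of_le_of_ne ((hq u).1 z) (Ne.symm hquz)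
        have hm : p u * q u z ≤ ∑ v, p v * q v z :=
          Finset.single_le_sum (f := fun v => p v * q v z)
            (fun v _ => mul_nonneg (hp.1 v) ((hq v).1 z)) (Finset.mem_univ u)
        have hmpos : 0 < ∑ v, p v * q v z := lt_of_lt_of_le (by positivity) hm
        apply mul_le_mul_of_nonneg_left _ (by positivity)
        have hlog : Real.log (q u z / (∑ v, p v * q v z)) ≤ Real.log ((p u)⁻¹) := by
          apply Real.log_le_log (by positivity)
          rw [div_le_iff₀ hmpos]
          rw [inv_mul_eq_div, le_div_iff₀ hpu']
          linarith [hm]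
        rw [Real.log_inv] at hlog
        exact hlog
    _ ≤ ∑ u : U, (1:ℝ) := by
        apply Finset.sum_le_sum; intro u _
        have : ∑ z, p u * q u z * (-Real.log (p u)) = p u * (-Real.log (p u)) := by
          rw [← Finset.sum_mul, ← Finset.mul_sum, (hq u).2]; ring
        rw [this]
        by_cases hpu : p u = 0
        · simp [hpu]
        have hpu' : 0 < p u := lt_of_le_of_ne (hp.1 u) (Ne.symm hpu)
        have hl : Real.log ((p u)⁻¹) ≤ (p u)⁻¹ - 1 :=
          Real.log_le_sub_one_of_pos (by positivity)
        rw [Real.log_inv] at hl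
        have : p u * (-Real.log (p u)) ≤ p u * ((p u)⁻¹ - 1) :=
          mul_le_mul_of_nonneg_left hl hpu'.le
        have e : p u * ((p u)⁻¹ - 1) = 1 - p u := by field_simp
        nlinarith [hp.1 u]
    _ = (Fintype.card U : ℝ) := by simp

lemma mySDnonneg {Z : Type} [Fintype Z] (p q : Z → ℝ) : 0 ≤ SD p q := by
  unfold SD
  have : (0:ℝ) ≤ ∑ z, |p z - q z| := Finset.sum_nonneg fun z _ => abs_nonneg _
  linarith

/-- **Statement 10 (Mutual-information security implies distinguishing security).**
`(Adv^DS)² ≤ 2·Adv^MIS`; in particular, for any `u₀, u₁ ∈ 𝒰` and `V ∈ 𝒱`, if `U` is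
uniformly distributed on `{u₀,u₁}` then `I(U;Z_V) ≥ (1/2)·SD(P_{V,u₀}, P_{V,u₁})²`. -/
theorem mis_implies_ds
    (U Z V : Type) [Fintype U] [Fintype Z] [Fintype V]
    [Nonempty U] [Nonempty Z] [Nonempty V]
    (P : V → U → Z → ℝ) (hP : ∀ v u, IsProbDist (P v u)) :
    (AdvDSfam P) ^ 2 ≤ 2 * AdvMISfam P ∧
    ∀ (u₀ u₁ : U) (v : V),
      (1/2) * (SD (P v u₀) (P v u₁)) ^ 2 ≤
        mutualInfo (fun _ : Bool => (1:ℝ)/2) (fun b => P v (if b then u₁ else u₀)) := by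
  have part2 : ∀ (u₀ u₁ : U) (v : V),
      (1/2) * (SD (P v u₀) (P v u₁)) ^ 2 ≤
        mutualInfo (fun _ : Bool => (1:ℝ)/2) (fun b => P v (if b then u₁ else u₀)) := by
    intro u₀ u₁ v
    have := myBool (fun b => P v (if b then u₁ else u₀)) (by simpa using hP v u₀)
      (by simpa using hP v u₁)
    simpa using this
  refine ⟨?_, part2⟩
  set M := AdvMISfam P with hM
  -- MIS set bounded above
  have hbdd : BddAbove {r : ℝ | ∃ (pU : U → ℝ), IsProbDist pU ∧ ∃ v : V,
      r = mutualInfo pU (fun u => P v u)} := by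
    refine ⟨(Fintype.card U : ℝ), ?_⟩
    rintro r ⟨pU, hpU, v, rfl⟩
    exact myMIBound pU (fun u => P v u) hpU (fun u => hP v u)
  -- key : for all u₀ u₁ v, (1/2) SD² ≤ M
  have key : ∀ (u₀ u₁ : U) (v : V), (1/2) * (SD (P v u₀) (P v u₁))^2 ≤ M := by
    intro u₀ u₁ v
    have hmem : mutualInfo (fun u => (if u = u₀ then (2:ℝ)⁻¹ else 0)
        + (if u = u₁ then (2:ℝ)⁻¹ else 0)) (fun u => P v u)
        ∈ {r : ℝ | ∃ (pU : U → ℝ), IsProbDist pU ∧ ∃ v : V,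
          r = mutualInfo pU (fun u => P v u)} :=
      ⟨_, myPUprob u₀ u₁, v, rfl⟩
    have hle := le_csSup hbdd hmem
    have := myTwoPoint (fun u => P v u) (fun u => hP v u) u₀ u₁
    exact le_trans this hle
  have hMnonneg : 0 ≤ 2 * M := by
    obtain ⟨u⟩ := ‹Nonempty U›
    obtain ⟨v⟩ := ‹Nonempty V›
    have := key u u v
    nlinarith [mySDnonneg (P v u) (P v u)]
  have hsup : AdvDSfam P ≤ Real.sqrt (2 * M) := by
    apply Real.sSup_le
    · rintro r ⟨u₀, u₁, v, rfl⟩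
      have h1 : (SD (P v u₀) (P v u₁))^2 ≤ 2 * M := by linarith [key u₀ u₁ v]
      calc SD (P v u₀) (P v u₁) = Real.sqrt ((SD (P v u₀) (P v u₁))^2) :=
            (Real.sqrt_sq (mySDnonneg _ _)).symm
        _ ≤ Real.sqrt (2 * M) := Real.sqrt_le_sqrt h1
    · exact Real.sqrt_nonneg _
  have hDSnonneg : 0 ≤ AdvDSfam P := by
    apply Real.sSup_nonneg
    rintro r ⟨u₀, u₁, v, rfl⟩
    exact mySDnonneg _ _
  calc (AdvDSfam P)^2 ≤ (Real.sqrt (2 * M))^2 := by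
        apply pow_le_pow_left₀ hDSnonneg hsup
    _ = 2 * M := Real.sq_sqrt hMnonneg

end
end

section
/- (Distinguishing security implies mutual-information security.) Suppose |𝒵| ≥ 3 and ε := Adv^{DS} > 0. Then Adv^{MIS} ≤ 2·ε·ln(|𝒵|/ε); that is, for every probability distribution P_U on 𝒰 and every V ∈ 𝒱, I(U;Z_V) ≤ 2·ε·ln(|𝒵|/ε). -/
open scoped BigOperators Classical

noncomputable section

namespace DSMIS
open Finset

lemma mul_log_lipschitz {x y : ℝ} (hx : 0 ≤ x) (hxy : x ≤ y) (hy1 : y ≤ 1) :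
    y * Real.log y - x * Real.log x ≤ y - x := by
  rcases eq_or_lt_of_le hx with h0 | hx0
  · rw [← h0]
    simp only [Real.log_zero, mul_zero, sub_zero]
    have hy0 : 0 ≤ y := le_trans hx hxy
    have : Real.log y ≤ 0 := Real.log_nonpos hy0 hy1
    nlinarith
  · have hy0 : 0 < y := lt_of_lt_of_le hx0 hxy
    have h1 : Real.log (y / x) ≤ y / x - 1 := Real.log_le_sub_one_of_pos (div_pos hy0 hx0)
    have h2 : Real.log (y / x) = Real.log y - Real.log x := Real.log_div (ne_of_gt hy0) (ne_of_gt hx0)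
    have h3 : x * (Real.log y - Real.log x) ≤ y - x := by
      have := mul_le_mul_of_nonneg_left h1 (le_of_lt hx0)
      rw [h2] at this
      calc x * (Real.log y - Real.log x) ≤ x * (y / x - 1) := this
        _ = y - x := by field_simp
    have h4 : (y - x) * Real.log y ≤ 0 :=
      mul_nonpos_of_nonneg_of_nonpos (by linarith) (Real.log_nonpos (le_of_lt hy0) hy1)
    nlinarith [h3, h4]

lemma add_mul_log_le {p d : ℝ} (hp : 0 ≤ p) (hd : 0 ≤ d) :
    p * Real.log p + d * Real.log d ≤ (p + d) * Real.log (p + d) := by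
  have h1 : p * Real.log p ≤ p * Real.log (p + d) := by
    rcases eq_or_lt_of_le hp with h | h
    · rw [← h]; simp
    · exact mul_le_mul_of_nonneg_left (Real.log_le_log h (by linarith)) hp
  have h2 : d * Real.log d ≤ d * Real.log (p + d) := by
    rcases eq_or_lt_of_le hd with h | h
    · rw [← h]; simp
    · exact mul_le_mul_of_nonneg_left (Real.log_le_log h (by linarith)) hd
  nlinarith [h1, h2]

lemma sum_neg_mul_log_le {Z : Type} [Fintype Z] (a : Z → ℝ) (ha : ∀ z, 0 ≤ a z)
    {δ : ℝ} (hδ : ∑ z, a z = δ) (hδ0 : 0 < δ) (hN : 0 < (Fintype.card Z : ℝ)) :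
    ∑ z, -(a z * Real.log (a z)) ≤ δ * (Real.log (Fintype.card Z) - Real.log δ) := by
  set N : ℝ := (Fintype.card Z : ℝ) with hNdef
  have key : ∀ z, a z * (Real.log δ - Real.log N - Real.log (a z)) ≤ δ / N - a z := by
    intro z
    rcases eq_or_lt_of_le (ha z) with h | h
    · rw [← h]; simp; positivity
    · have hpos : 0 < δ / (N * a z) := by positivity
      have h1 : Real.log (δ / (N * a z)) ≤ δ / (N * a z) - 1 := Real.log_le_sub_one_of_pos hpos
      have h2 : Real.log (δ / (N * a z)) = Real.log δ - Real.log N - Real.log (a z) := by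
        rw [Real.log_div (ne_of_gt hδ0) (by positivity), Real.log_mul (ne_of_gt hN) (ne_of_gt h)]
        ring
      rw [← h2]
      have := mul_le_mul_of_nonneg_left h1 (le_of_lt h)
      calc a z * Real.log (δ / (N * a z)) ≤ a z * (δ / (N * a z) - 1) := this
        _ = δ / N - a z := by field_simp
  have hsum : ∑ z, a z * (Real.log δ - Real.log N - Real.log (a z)) ≤ 0 := by
    calc ∑ z, a z * (Real.log δ - Real.log N - Real.log (a z))
        ≤ ∑ z, (δ / N - a z) := Finset.sum_le_sum (fun z _ => key z)
      _ = (Fintype.card Z : ℝ) * (δ / N) - δ := by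
          rw [Finset.sum_sub_distrib, Finset.sum_const, Finset.card_univ, nsmul_eq_mul, hδ]
      _ = 0 := by field_simp; rw [hNdef]; ring
  have hexp : ∑ z, a z * (Real.log δ - Real.log N - Real.log (a z))
      = δ * (Real.log δ - Real.log N) - ∑ z, a z * Real.log (a z) := by
    rw [← hδ, Finset.sum_mul]
    rw [← Finset.sum_sub_distrib]
    congr 1; ext z; ring
  rw [hexp] at hsum
  have : ∑ z, -(a z * Real.log (a z)) = -∑ z, a z * Real.log (a z) := by
    rw [Finset.sum_neg_distrib]
  linarith [hsum, this.le, this.ge]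

lemma prob_le_one {α : Type} [Fintype α] {p : α → ℝ} (hp : IsProbDist p) (a : α) : p a ≤ 1 := by
  rw [← hp.2]
  exact Finset.single_le_sum (fun i _ => hp.1 i) (mem_univ a)

lemma one_le_log_three : (1 : ℝ) ≤ Real.log 3 := by
  rw [Real.le_log_iff_exp_le (by norm_num : (0:ℝ) < 3)]
  have := Real.exp_one_lt_d9
  linarith

lemma entropy_diff_bound {Z : Type} [Fintype Z] (p q : Z → ℝ)
    (hp : IsProbDist p) (hq : IsProbDist q) {ε : ℝ} (hε0 : 0 < ε) (hε1 : ε ≤ 1)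
    (hZ : 3 ≤ Fintype.card Z) (hSD : SD p q ≤ ε) :
    (∑ z, -(q z * Real.log (q z))) - (∑ z, -(p z * Real.log (p z)))
      ≤ 2 * ε * Real.log ((Fintype.card Z : ℝ) / ε) := by
  set N : ℝ := (Fintype.card Z : ℝ) with hNdef
  have hN3 : (3 : ℝ) ≤ N := by rw [hNdef]; exact_mod_cast hZ
  have hN0 : 0 < N := by linarith
  have hlogN : 1 ≤ Real.log N :=
    le_trans one_le_log_three (Real.log_le_log (by norm_num) hN3)
  have hlogε : Real.log ε ≤ 0 := Real.log_nonpos (le_of_lt hε0) hε1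
  have hRHS : Real.log (N / ε) = Real.log N - Real.log ε :=
    Real.log_div (ne_of_gt hN0) (ne_of_gt hε0)
  set a : Z → ℝ := fun z => max (q z - p z) 0 with hadef
  set b : Z → ℝ := fun z => max (p z - q z) 0 with hbdef
  have ha0 : ∀ z, 0 ≤ a z := fun z => le_max_right _ _
  have hb0 : ∀ z, 0 ≤ b z := fun z => le_max_right _ _
  have hvals : ∀ z, (p z ≤ q z → a z = q z - p z ∧ b z = 0) ∧ (q z ≤ p z → a z = 0 ∧ b z = p z - q z) := by
    intro z
    constructor
    · intro h
      exact ⟨max_eq_left (by linarith), max_eq_right (by linarith)⟩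
    · intro h
      exact ⟨max_eq_right (by linarith), max_eq_left (by linarith)⟩
  have hab : ∀ z, a z + b z = |p z - q z| := by
    intro z
    rcases le_total (p z) (q z) with h | h
    · obtain ⟨h1, h2⟩ := (hvals z).1 h
      rw [abs_of_nonpos (by linarith), h1, h2]; ring
    · obtain ⟨h1, h2⟩ := (hvals z).2 h
      rw [abs_of_nonneg (by linarith), h1, h2]; ring
  have habd : ∀ z, a z - b z = q z - p z := by
    intro z
    rcases le_total (p z) (q z) with h | h
    · obtain ⟨h1, h2⟩ := (hvals z).1 h
      rw [h1, h2]; ring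
    · obtain ⟨h1, h2⟩ := (hvals z).2 h
      rw [h1, h2]; ring
  set δ : ℝ := ∑ z, a z with hδdef
  have hδ0 : 0 ≤ δ := Finset.sum_nonneg (fun z _ => ha0 z)
  have hsumb : ∑ z, b z = δ := by
    have h1 : ∑ z, (a z - b z) = 0 := by
      have : ∑ z, (a z - b z) = ∑ z, q z - ∑ z, p z := by
        rw [← Finset.sum_sub_distrib]
        exact Finset.sum_congr rfl (fun z _ => habd z)
      rw [this, hp.2, hq.2]; ring
    rw [Finset.sum_sub_distrib] at h1
    linarith
  have hδε : δ ≤ ε := by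
    have h2 : ∑ z, (a z + b z) = ∑ z, |p z - q z| :=
      Finset.sum_congr rfl (fun z _ => hab z)
    rw [Finset.sum_add_distrib, hsumb] at h2
    have : SD p q = δ := by rw [SD, ← h2]; ring
    linarith [hSD, this.symm.le, this.le]
  -- per-z bound
  have hperz : ∀ z, -(q z * Real.log (q z)) - (-(p z * Real.log (p z)))
      ≤ -(a z * Real.log (a z)) + b z := by
    intro z
    rcases le_total (p z) (q z) with h | h
    · obtain ⟨haz, hbz⟩ := (hvals z).1 h
      have := add_mul_log_le (hp.1 z) (by rw [haz]; linarith : 0 ≤ a z)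
      rw [haz] at this ⊢
      have heq : p z + (q z - p z) = q z := by ring
      rw [heq] at this
      rw [hbz]
      linarith
    · obtain ⟨haz, hbz⟩ := (hvals z).2 h
      have := mul_log_lipschitz (hq.1 z) h (prob_le_one hp z)
      rw [haz, hbz]
      simp only [Real.log_zero, mul_zero, zero_mul, neg_zero]
      linarith
  have hsum1 : (∑ z, -(q z * Real.log (q z))) - (∑ z, -(p z * Real.log (p z)))
      ≤ (∑ z, -(a z * Real.log (a z))) + δ := by
    rw [← hsumb, ← Finset.sum_add_distrib, ← Finset.sum_sub_distrib]
    exact Finset.sum_le_sum (fun z _ => hperz z)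
  rcases eq_or_lt_of_le hδ0 with hδz | hδpos
  · -- δ = 0 : all a z = 0 and all b z = 0
    have haz : ∀ z ∈ Finset.univ, a z = 0 :=
      fun z _ => le_antisymm (by
        have := (Finset.sum_eq_zero_iff_of_nonneg (fun z _ => ha0 z)).mp hδz.symm
        exact le_of_eq (this z (mem_univ z))) (ha0 z)
    have h1 : (∑ z, -(a z * Real.log (a z))) = 0 := by
      apply Finset.sum_eq_zero
      intro z hz
      rw [haz z hz]; simp
    have hpos : 0 ≤ 2 * ε * Real.log (N / ε) := by
      apply mul_nonneg (by linarith)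
      rw [hRHS]; linarith
    calc (∑ z, -(q z * Real.log (q z))) - (∑ z, -(p z * Real.log (p z)))
        ≤ (∑ z, -(a z * Real.log (a z))) + δ := hsum1
      _ = 0 := by rw [h1, ← hδz]; ring
      _ ≤ 2 * ε * Real.log (N / ε) := hpos
  · have h2 : ∑ z, -(a z * Real.log (a z)) ≤ δ * (Real.log N - Real.log δ) :=
      sum_neg_mul_log_le a ha0 rfl hδpos hN0
    have h3 : ε * Real.log ε - δ * Real.log δ ≤ ε - δ :=
      mul_log_lipschitz hδ0 hδε hε1
    have hA : (ε - δ) * 1 ≤ (ε - δ) * Real.log N :=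
      mul_le_mul_of_nonneg_left hlogN (by linarith)
    have hB : ε * 1 ≤ ε * (Real.log N - Real.log ε) :=
      mul_le_mul_of_nonneg_left (by linarith) (le_of_lt hε0)
    rw [hRHS]
    nlinarith [hsum1, h2, h3, hA, hB]

lemma mi_le {U Z : Type} [Fintype U] [Fintype Z] (p : U → ℝ) (q : U → Z → ℝ)
    (hp : IsProbDist p) (hq : ∀ u, IsProbDist (q u)) {ε : ℝ}
    (hε0 : 0 < ε) (hε1 : ε ≤ 1) (hZ : 3 ≤ Fintype.card Z)
    (hpair : ∀ u u', SD (q u) (q u') ≤ ε) :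
    mutualInfo p q ≤ 2 * ε * Real.log ((Fintype.card Z : ℝ) / ε) := by
  set Q : Z → ℝ := fun z => ∑ u, p u * q u z with hQdef
  have hQ0 : ∀ z, 0 ≤ Q z :=
    fun z => Finset.sum_nonneg (fun u _ => mul_nonneg (hp.1 u) ((hq u).1 z))
  have hQsum : ∑ z, Q z = 1 := by
    rw [hQdef]
    calc ∑ z, ∑ u, p u * q u z = ∑ u, ∑ z, p u * q u z := Finset.sum_comm
      _ = ∑ u, p u * ∑ z, q u z := by
          exact Finset.sum_congr rfl (fun u _ => (Finset.mul_sum _ _ _).symm)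
      _ = ∑ u, p u := Finset.sum_congr rfl (fun u _ => by rw [(hq u).2, mul_one])
      _ = 1 := hp.2
  have hQprob : IsProbDist Q := ⟨hQ0, hQsum⟩
  -- SD to mixture
  have hQSD : ∀ u, SD (q u) Q ≤ ε := by
    intro u
    have h1 : ∀ z, |q u z - Q z| ≤ ∑ u', p u' * |q u z - q u' z| := by
      intro z
      have h2 : q u z - Q z = ∑ u', p u' * (q u z - q u' z) := by
        rw [hQdef]
        have : ∑ u', p u' * (q u z - q u' z) = (∑ u', p u') * q u z - ∑ u', p u' * q u' z := by
          rw [Finset.sum_mul, ← Finset.sum_sub_distrib]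
          exact Finset.sum_congr rfl (fun u' _ => by ring)
        rw [this, hp.2, one_mul]
      rw [h2]
      calc |∑ u', p u' * (q u z - q u' z)| ≤ ∑ u', |p u' * (q u z - q u' z)| :=
            Finset.abs_sum_le_sum_abs _ _
        _ = ∑ u', p u' * |q u z - q u' z| := by
            exact Finset.sum_congr rfl (fun u' _ => by
              rw [abs_mul, abs_of_nonneg (hp.1 u')])
    calc SD (q u) Q = (1/2) * ∑ z, |q u z - Q z| := rfl
      _ ≤ (1/2) * ∑ z, ∑ u', p u' * |q u z - q u' z| := by
          apply mul_le_mul_of_nonneg_left _ (by norm_num)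
          exact Finset.sum_le_sum (fun z _ => h1 z)
      _ = ∑ u', p u' * SD (q u) (q u') := by
          have e1 : (1/2:ℝ) * ∑ z, ∑ u', p u' * |q u z - q u' z|
              = ∑ z, ∑ u', (1/2 : ℝ) * (p u' * |q u z - q u' z|) := by
            rw [Finset.mul_sum]
            exact Finset.sum_congr rfl (fun z _ => Finset.mul_sum _ _ _)
          have e3 : ∀ u', ∑ z, (1/2 : ℝ) * (p u' * |q u z - q u' z|) = p u' * SD (q u) (q u') := by
            intro u'
            simp only [SD, Finset.mul_sum]
            exact Finset.sum_congr rfl (fun z _ => by ring)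
          rw [e1, Finset.sum_comm]
          exact Finset.sum_congr rfl (fun u' _ => e3 u')
      _ ≤ ∑ u', p u' * ε :=
          Finset.sum_le_sum (fun u' _ =>
            mul_le_mul_of_nonneg_left (hpair u u') (hp.1 u'))
      _ = ε := by rw [← Finset.sum_mul, hp.2, one_mul]
  -- decomposition
  have hterm : ∀ u z, p u * q u z * Real.log (q u z / Q z)
      = p u * (q u z * Real.log (q u z)) - p u * q u z * Real.log (Q z) := by
    intro u z
    by_cases h : p u * q u z = 0
    · rcases mul_eq_zero.mp h with h' | h' <;> rw [h'] <;> simp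
    · have hpu : p u ≠ 0 := fun hc => h (by rw [hc, zero_mul])
      have hqu : q u z ≠ 0 := fun hc => h (by rw [hc, mul_zero])
      have hqpos : 0 < q u z := lt_of_le_of_ne ((hq u).1 z) (Ne.symm hqu)
      have hppos : 0 < p u := lt_of_le_of_ne (hp.1 u) (Ne.symm hpu)
      have hQpos : 0 < Q z := by
        have : p u * q u z ≤ Q z :=
          Finset.single_le_sum (fun u' _ => mul_nonneg (hp.1 u') ((hq u').1 z)) (mem_univ u)
        nlinarith
      rw [Real.log_div hqu (ne_of_gt hQpos)]
      ring
  have hdecomp : mutualInfo p q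
      = ∑ u, p u * ((∑ z, -(Q z * Real.log (Q z))) - ∑ z, -(q u z * Real.log (q u z))) := by
    rw [mutualInfo]
    have h1 : ∀ u, ∑ z, p u * q u z * Real.log (q u z / Q z)
        = p u * (∑ z, q u z * Real.log (q u z)) - ∑ z, p u * q u z * Real.log (Q z) := by
      intro u
      rw [Finset.mul_sum, ← Finset.sum_sub_distrib]
      exact Finset.sum_congr rfl (fun z _ => hterm u z)
    calc ∑ u, ∑ z, p u * q u z * Real.log (q u z / Q z)
        = ∑ u, (p u * (∑ z, q u z * Real.log (q u z)) - ∑ z, p u * q u z * Real.log (Q z)) :=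
          Finset.sum_congr rfl (fun u _ => h1 u)
      _ = ∑ u, p u * (∑ z, q u z * Real.log (q u z)) - ∑ z, Q z * Real.log (Q z) := by
          rw [Finset.sum_sub_distrib]
          congr 1
          rw [Finset.sum_comm]
          exact Finset.sum_congr rfl (fun z _ => by
            rw [hQdef, Finset.sum_mul])
      _ = ∑ u, p u * ((∑ z, -(Q z * Real.log (Q z))) - ∑ z, -(q u z * Real.log (q u z))) := by
          have hC : ∑ u, p u * (∑ z, Q z * Real.log (Q z)) = ∑ z, Q z * Real.log (Q z) := by
            rw [← Finset.sum_mul, hp.2, one_mul]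
          rw [← hC, ← Finset.sum_sub_distrib]
          apply Finset.sum_congr rfl
          intro u _
          rw [Finset.sum_neg_distrib, Finset.sum_neg_distrib]
          ring
  rw [hdecomp]
  calc ∑ u, p u * ((∑ z, -(Q z * Real.log (Q z))) - ∑ z, -(q u z * Real.log (q u z)))
      ≤ ∑ u, p u * (2 * ε * Real.log ((Fintype.card Z : ℝ) / ε)) := by
        apply Finset.sum_le_sum
        intro u _
        apply mul_le_mul_of_nonneg_left _ (hp.1 u)
        exact entropy_diff_bound (q u) Q (hq u) hQprob hε0 hε1 hZ (hQSD u)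
    _ = 2 * ε * Real.log ((Fintype.card Z : ℝ) / ε) := by
        rw [← Finset.sum_mul, hp.2, one_mul]
end DSMIS

/-- **Distinguishing security implies mutual-information security.**
If `|𝒵| ≥ 3` and `ε := Adv^DS > 0`, then `Adv^MIS ≤ 2·ε·ln(|𝒵|/ε)`; that is, for every
message distribution `pU` and every `V ∈ 𝒱`, `I(U;Z_V) ≤ 2·ε·ln(|𝒵|/ε)`. -/
theorem ds_implies_mis
    (U Z V : Type) [Fintype U] [Fintype Z] [Fintype V]
    [Nonempty U] [Nonempty Z] [Nonempty V]
    (P : V → U → Z → ℝ) (hP : ∀ v u, IsProbDist (P v u))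
    (hZ : 3 ≤ Fintype.card Z) (hε : 0 < AdvDSfam P) :
    AdvMISfam P ≤
        2 * AdvDSfam P * Real.log ((Fintype.card Z : ℝ) / AdvDSfam P) ∧
    ∀ (pU : U → ℝ), IsProbDist pU → ∀ v : V,
      mutualInfo pU (fun u => P v u) ≤
        2 * AdvDSfam P * Real.log ((Fintype.card Z : ℝ) / AdvDSfam P) := by
  classical
  set ε : ℝ := AdvDSfam P with hεdef
  set B : ℝ := 2 * ε * Real.log ((Fintype.card Z : ℝ) / ε) with hBdef
  have hSD01 : ∀ (v : V) (u₀ u₁ : U), SD (P v u₀) (P v u₁) ≤ 1 := by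
    intro v u₀ u₁
    have h : ∀ z, |P v u₀ z - P v u₁ z| ≤ P v u₀ z + P v u₁ z := by
      intro z
      have h0 := (hP v u₀).1 z
      have h1 := (hP v u₁).1 z
      rw [abs_le]
      constructor <;> linarith
    calc SD (P v u₀) (P v u₁) = (1/2) * ∑ z, |P v u₀ z - P v u₁ z| := rfl
      _ ≤ (1/2) * ∑ z, (P v u₀ z + P v u₁ z) := by
          apply mul_le_mul_of_nonneg_left _ (by norm_num)
          exact Finset.sum_le_sum (fun z _ => h z)
      _ = 1 := by
          rw [Finset.sum_add_distrib, (hP v u₀).2, (hP v u₁).2]; norm_num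
  have hbdd : BddAbove {r : ℝ | ∃ (u₀ u₁ : U) (v : V), r = SD (P v u₀) (P v u₁)} := by
    refine ⟨1, ?_⟩
    rintro r ⟨u₀, u₁, v, rfl⟩
    exact hSD01 v u₀ u₁
  have hne : {r : ℝ | ∃ (u₀ u₁ : U) (v : V), r = SD (P v u₀) (P v u₁)}.Nonempty :=
    ⟨SD (P (Classical.arbitrary V) (Classical.arbitrary U)) (P (Classical.arbitrary V) (Classical.arbitrary U)),
      Classical.arbitrary U, Classical.arbitrary U, Classical.arbitrary V, rfl⟩
  have hpair : ∀ (v : V) (u₀ u₁ : U), SD (P v u₀) (P v u₁) ≤ ε := by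
    intro v u₀ u₁
    exact le_csSup hbdd ⟨u₀, u₁, v, rfl⟩
  have hε1 : ε ≤ 1 := by
    rw [hεdef, AdvDSfam]
    apply csSup_le hne
    rintro r ⟨u₀, u₁, v, rfl⟩
    exact hSD01 v u₀ u₁
  have part2 : ∀ (pU : U → ℝ), IsProbDist pU → ∀ v : V,
      mutualInfo pU (fun u => P v u) ≤ B := by
    intro pU hpU v
    exact DSMIS.mi_le pU (fun u => P v u) hpU (fun u => hP v u) hε hε1 hZ
      (fun u u' => hpair v u u')
  refine ⟨?_, part2⟩
  rw [AdvMISfam]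
  apply csSup_le
  · refine ⟨mutualInfo (fun _ => (Fintype.card U : ℝ)⁻¹) (fun u => P (Classical.arbitrary V) u),
      fun _ => (Fintype.card U : ℝ)⁻¹, ⟨fun u => by positivity, ?_⟩, Classical.arbitrary V, rfl⟩
    rw [Finset.sum_const, Finset.card_univ, nsmul_eq_mul]
    have : (Fintype.card U : ℝ) ≠ 0 := by
      exact_mod_cast Fintype.card_ne_zero
    field_simp
  · rintro r ⟨pU, hpU, v, rfl⟩
    exact part2 pU hpU v

end
end

section
/- Let X₁, …, X_K be independent identically distributed real random variables with 0 ≤ X_k ≤ δ almost surely (for some δ > 0) and E[X₁] ≤ μ. Then for every real A, Pr{ Σ_{k=1}^K X_k > A } ≤ exp( −δ⁻¹·(A − e·K·μ) ), where e is Euler's number. -/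
open MeasureTheory ProbabilityTheory
open scoped BigOperators

/-- pointwise convexity bound: for `s ∈ [0,1]`, `exp s ≤ 1 + (e-1) s`. -/
lemma exp_le_linear_of_mem_Icc {s : ℝ} (h0 : 0 ≤ s) (h1 : s ≤ 1) :
    Real.exp s ≤ 1 + (Real.exp 1 - 1) * s := by
  have := convexOn_exp.2 (Set.mem_univ (0:ℝ)) (Set.mem_univ (1:ℝ))
    (show (0:ℝ) ≤ 1 - s by linarith) h0 (by ring : (1 - s) + s = 1)
  simp only [smul_eq_mul, mul_zero, mul_one, zero_add, Real.exp_zero] at this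
  linarith

/-- **Statement 13.** Let `X₁, …, X_K` be i.i.d. real random variables with
`0 ≤ X_k ≤ δ` almost surely and `E[X₁] ≤ μ`. Then for every real `A`,
`Pr{ Σ_k X_k > A } ≤ exp( −δ⁻¹·(A − e·K·μ) )`. -/
theorem iid_bounded_sum_tail_bound
    {Ω : Type*} [MeasurableSpace Ω] (P : Measure Ω) [IsProbabilityMeasure P]
    (K : ℕ) (hK : 0 < K) (X : Fin K → Ω → ℝ) (δ μ A : ℝ) (hδ : 0 < δ)
    (hmeas : ∀ k, Measurable (X k))
    (hindep : iIndepFun X P)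
    (hident : ∀ k, IdentDistrib (X k) (X ⟨0, hK⟩) P P)
    (hbdd : ∀ k, ∀ᵐ ω ∂P, X k ω ∈ Set.Icc (0:ℝ) δ)
    (hmean : (∫ ω, X ⟨0, hK⟩ ω ∂P) ≤ μ) :
    (P {ω | A < ∑ k, X k ω}).toReal ≤
      Real.exp (-(δ⁻¹ * (A - Real.exp 1 * K * μ))) := by
  set t : ℝ := δ⁻¹ with ht_def
  have ht : 0 ≤ t := inv_nonneg.mpr hδ.le
  -- auxiliary facts about each X k
  have hXint : ∀ k, Integrable (X k) P := by
    intro k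
    refine Integrable.mono' (integrable_const δ) (hmeas k).aestronglyMeasurable ?_
    filter_upwards [hbdd k] with ω hω
    rw [Real.norm_eq_abs, abs_of_nonneg hω.1]
    exact hω.2
  have hmean0 : ∀ k, (∫ ω, X k ω ∂P) ≤ μ := fun k =>
    (hident k).integral_eq ▸ hmean
  have hμ0 : 0 ≤ μ := le_trans (integral_nonneg_of_ae
    ((hbdd ⟨0, hK⟩).mono fun ω h => h.1)) hmean
  -- integrability of exp(t * X k)
  have hint : ∀ k, Integrable (fun ω => Real.exp (t * X k ω)) P := by
    intro k
    refine Integrable.mono' (integrable_const (Real.exp (t * δ)))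
      ((hmeas k).const_mul t).exp.aestronglyMeasurable ?_
    filter_upwards [hbdd k] with ω hω
    rw [Real.norm_eq_abs, abs_of_pos (Real.exp_pos _), Real.exp_le_exp]
    exact mul_le_mul_of_nonneg_left hω.2 ht
  -- bound on each mgf
  have hmgf : ∀ k, mgf (X k) P t ≤ Real.exp (t * (Real.exp 1 * μ)) := by
    intro k
    have hle : mgf (X k) P t ≤ 1 + (Real.exp 1 - 1) * t * (∫ ω, X k ω ∂P) := by
      rw [mgf]
      have hInt2 : Integrable (fun ω => 1 + (Real.exp 1 - 1) * t * X k ω) P :=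
        (integrable_const 1).add ((hXint k).const_mul _)
      have step : ∫ ω, Real.exp (t * X k ω) ∂P
          ≤ ∫ ω, (1 + (Real.exp 1 - 1) * t * X k ω) ∂P := by
        refine integral_mono_ae (hint k) hInt2 ?_
        filter_upwards [hbdd k] with ω hω
        have h0 : 0 ≤ t * X k ω := mul_nonneg ht hω.1
        have h1 : t * X k ω ≤ 1 := by
          rw [ht_def]
          calc δ⁻¹ * X k ω ≤ δ⁻¹ * δ := mul_le_mul_of_nonneg_left hω.2 ht
            _ = 1 := inv_mul_cancel₀ hδ.ne'
        calc Real.exp (t * X k ω) ≤ 1 + (Real.exp 1 - 1) * (t * X k ω) :=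
              exp_le_linear_of_mem_Icc h0 h1
          _ = 1 + (Real.exp 1 - 1) * t * X k ω := by ring
      refine step.trans_eq ?_
      rw [integral_add (integrable_const 1) ((hXint k).const_mul _),
        integral_const, integral_const_mul]
      simp
    have hE0 : 0 ≤ ∫ ω, X k ω ∂P :=
      integral_nonneg_of_ae ((hbdd k).mono fun ω h => h.1)
    have he1 : (1:ℝ) ≤ Real.exp 1 := by
      have := Real.add_one_le_exp (1:ℝ); linarith
    calc mgf (X k) P t ≤ 1 + (Real.exp 1 - 1) * t * (∫ ω, X k ω ∂P) := hle
      _ ≤ 1 + Real.exp 1 * t * μ := by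
          have : (Real.exp 1 - 1) * t * (∫ ω, X k ω ∂P) ≤ Real.exp 1 * t * μ := by
            apply mul_le_mul
            · exact mul_le_mul_of_nonneg_right (by linarith) ht
            · exact hmean0 k
            · exact hE0
            · positivity
          linarith
      _ ≤ Real.exp (Real.exp 1 * t * μ) := by
          have := Real.add_one_le_exp (Real.exp 1 * t * μ); linarith
      _ = Real.exp (t * (Real.exp 1 * μ)) := by ring_nf
  -- Chernoff bound on the sum
  have hintS : Integrable (fun ω => Real.exp (t * (∑ k, X k) ω)) P := by
    have h := hindep.integrable_exp_mul_sum (t := t) hmeas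
      (s := Finset.univ) (fun i _ => hint i)
    simpa using h
  have hsum := measure_ge_le_exp_mul_mgf (μ := P) (X := ∑ k, X k) A ht hintS
  have hmono : (P {ω | A < ∑ k, X k ω}).toReal ≤
      (P {ω | A ≤ (∑ k, X k) ω}).toReal := by
    apply ENNReal.toReal_mono (measure_ne_top _ _)
    apply measure_mono
    intro ω hω
    simp only [Set.mem_setOf_eq, Finset.sum_apply] at *
    exact hω.le
  have hprod : mgf (∑ k, X k) P t ≤ Real.exp (t * (Real.exp 1 * K * μ)) := by
    rw [hindep.mgf_sum hmeas]
    calc ∏ k, mgf (X k) P t ≤ ∏ _k : Fin K, Real.exp (t * (Real.exp 1 * μ)) :=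
          Finset.prod_le_prod (fun k _ => mgf_nonneg) (fun k _ => hmgf k)
      _ = Real.exp (t * (Real.exp 1 * μ)) ^ K := by simp
      _ = Real.exp (t * (Real.exp 1 * K * μ)) := by
          rw [← Real.exp_nat_mul]; ring_nf
  calc (P {ω | A < ∑ k, X k ω}).toReal
      ≤ (P {ω | A ≤ (∑ k, X k) ω}).toReal := hmono
    _ ≤ Real.exp (-t * A) * mgf (∑ k, X k) P t := hsum
    _ ≤ Real.exp (-t * A) * Real.exp (t * (Real.exp 1 * K * μ)) := by
        exact mul_le_mul_of_nonneg_left hprod (Real.exp_pos _).le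
    _ = Real.exp (-(t * (A - Real.exp 1 * K * μ))) := by
        rw [← Real.exp_add]; ring_nf
end
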